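/- Under the hypotheses of the local existence result, assume additionally that G is a k-set contraction in the sense β(G(Ω × [0,1])) ≤ k β(Ω) for all bounded Ω ⊂ U with k ∈ [0,1), and E is separable. Then the translation operator Φ_t(x,λ) := u(t; x, λ) satisfies β(Φ_t(Ω × [0,1])) ≤ e^{(k-1)t} β(Ω) for all t ∈ (0, t̄] and all Ω ⊆ cl V. -/

import Mathlib

open Bornology Set

/-- Hausdorff measure of noncompactness. -/
noncomputable def hmnc {E : Type*} [NormedAddCommGroup E] (Ω : Set E) : ℝ :=
  sInf {r : ℝ | 0 < r ∧ ∃ S : Finset E, Ω ⊆ ⋃ x ∈ S, Metric.ball x r}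

section MNC
open Metric Pointwise

variable {E : Type*} [NormedAddCommGroup E] [NormedSpace ℝ E]

lemma hmnc_bddBelow (Ω : Set E) :
    BddBelow {r : ℝ | 0 < r ∧ ∃ S : Finset E, Ω ⊆ ⋃ x ∈ S, Metric.ball x r} :=
  ⟨0, fun _ hr => hr.1.le⟩

lemma hmnc_nonneg (Ω : Set E) : 0 ≤ hmnc Ω :=
  Real.sInf_nonneg (fun _ hr => hr.1.le)

lemma hmnc_set_nonempty {Ω : Set E} (hΩ : IsBounded Ω) :
    {r : ℝ | 0 < r ∧ ∃ S : Finset E, Ω ⊆ ⋃ x ∈ S, Metric.ball x r}.Nonempty := by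
  obtain ⟨r, hr⟩ := (isBounded_iff_subset_ball (0:E)).1 hΩ
  refine ⟨max r 1, lt_of_lt_of_le one_pos (le_max_right _ _), {0}, ?_⟩
  intro x hx
  simp only [Finset.mem_singleton, iUnion_iUnion_eq_left]
  exact ball_subset_ball (le_max_left _ _) (hr hx)

lemma hmnc_le_of_forall {Ω : Set E} {c : ℝ} (hc : 0 ≤ c)
    (h : ∀ ε > (0:ℝ), ∃ S : Finset E, Ω ⊆ ⋃ x ∈ S, Metric.ball x (c + ε)) :
    hmnc Ω ≤ c := by
  refine le_of_forall_pos_le_add fun ε hε => ?_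
  obtain ⟨S, hS⟩ := h ε hε
  exact csInf_le (hmnc_bddBelow Ω) ⟨by linarith, S, hS⟩

lemma exists_cover_of_lt {Ω : Set E} (hΩ : IsBounded Ω) {r : ℝ} (hr : hmnc Ω < r) :
    ∃ S : Finset E, Ω ⊆ ⋃ x ∈ S, Metric.ball x r := by
  obtain ⟨r', ⟨hr'0, S, hS⟩, hlt⟩ := exists_lt_of_csInf_lt (hmnc_set_nonempty hΩ) hr
  exact ⟨S, hS.trans (iUnion₂_mono fun x _ => ball_subset_ball hlt.le)⟩

lemma hmnc_mono {A B : Set E} (h : A ⊆ B) (hB : IsBounded B) : hmnc A ≤ hmnc B := by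
  refine hmnc_le_of_forall (hmnc_nonneg B) fun ε hε => ?_
  obtain ⟨S, hS⟩ := exists_cover_of_lt hB (by linarith : hmnc B < hmnc B + ε)
  exact ⟨S, h.trans hS⟩

lemma hmnc_add_le {A B : Set E} (hA : IsBounded A) (hB : IsBounded B) :
    hmnc (A + B) ≤ hmnc A + hmnc B := by
  classical
  refine hmnc_le_of_forall (add_nonneg (hmnc_nonneg A) (hmnc_nonneg B)) fun ε hε => ?_
  obtain ⟨S, hS⟩ := exists_cover_of_lt hA (by linarith : hmnc A < hmnc A + ε / 2)
  obtain ⟨T, hT⟩ := exists_cover_of_lt hB (by linarith : hmnc B < hmnc B + ε / 2)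
  refine ⟨S + T, ?_⟩
  rintro z ⟨x, hx, y, hy, rfl⟩
  obtain ⟨p, hpS, hp⟩ := by simpa using hS hx
  obtain ⟨q, hqT, hq⟩ := by simpa using hT hy
  simp only [mem_iUnion, exists_prop]
  refine ⟨p + q, Finset.add_mem_add hpS hqT, ?_⟩
  have : dist (x + y) (p + q) ≤ dist x p + dist y q := dist_add_add_le x y p q
  simp only [mem_ball] at *
  linarith

lemma hmnc_smul_le {A : Set E} (hA : IsBounded A) {c : ℝ} (hc : 0 < c) :
    hmnc (c • A) ≤ c * hmnc A := by
  classical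
  refine hmnc_le_of_forall (mul_nonneg hc.le (hmnc_nonneg A)) fun ε hε => ?_
  obtain ⟨S, hS⟩ := exists_cover_of_lt hA (by have := div_pos hε hc; linarith : hmnc A < hmnc A + ε / c)
  refine ⟨S.image (fun x => c • x), ?_⟩
  rintro z ⟨x, hx, rfl⟩
  obtain ⟨p, hpS, hp⟩ := by simpa using hS hx
  simp only [mem_iUnion, exists_prop, Finset.mem_image]
  refine ⟨c • p, ⟨p, hpS, rfl⟩, ?_⟩
  rw [mem_ball]
  have : dist (c • x) (c • p) = c * dist x p := by
    rw [dist_smul₀, Real.norm_of_nonneg hc.le]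
  rw [this]
  calc c * dist x p < c * (hmnc A + ε / c) := by
        exact (mul_lt_mul_iff_right₀ hc).2 hp
    _ = c * hmnc A + ε := by field_simp

lemma hmnc_closedBall_le (r : ℝ) (hr : 0 ≤ r) : hmnc (Metric.closedBall (0:E) r) ≤ r := by
  refine hmnc_le_of_forall hr fun ε hε => ⟨{0}, ?_⟩
  intro x hx
  simp only [Finset.mem_singleton, iUnion_iUnion_eq_left]
  exact lt_of_le_of_lt (mem_closedBall.1 hx) (by linarith)

lemma hmnc_insert_zero_le {A : Set E} (hA : IsBounded A) :
    hmnc (insert (0:E) A) ≤ hmnc A := by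
  classical
  refine hmnc_le_of_forall (hmnc_nonneg A) fun ε hε => ?_
  obtain ⟨S, hS⟩ := exists_cover_of_lt hA (by linarith : hmnc A < hmnc A + ε)
  refine ⟨insert 0 S, ?_⟩
  rintro x (rfl | hx)
  · simp only [mem_iUnion, exists_prop]
    refine ⟨0, Finset.mem_insert_self _ _, ?_⟩
    simp only [mem_ball, dist_self]
    have := hmnc_nonneg A; linarith
  · obtain ⟨p, hpS, hp⟩ := by simpa using hS hx
    simp only [mem_iUnion, exists_prop]
    exact ⟨p, Finset.mem_insert_of_mem hpS, by simpa using hp⟩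

lemma hmnc_closure_le {A : Set E} (hA : IsBounded A) : hmnc (closure A) ≤ hmnc A := by
  refine hmnc_le_of_forall (hmnc_nonneg A) fun ε hε => ?_
  obtain ⟨S, hS⟩ := exists_cover_of_lt hA (by linarith : hmnc A < hmnc A + ε / 2)
  refine ⟨S, ?_⟩
  have h1 : closure A ⊆ ⋃ x ∈ S, closure (ball x (hmnc A + ε / 2)) := by
    rw [← Finset.closure_biUnion]
    exact closure_mono hS
  refine h1.trans (iUnion₂_mono fun x _ => ?_)
  exact (closure_ball_subset_closedBall).trans
    (closedBall_subset_ball (by linarith))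

lemma hmnc_convexHull_le {A : Set E} (hA : IsBounded A) :
    hmnc (convexHull ℝ A) ≤ hmnc A := by
  classical
  refine hmnc_le_of_forall (hmnc_nonneg A) fun ε hε => ?_
  set ρ := hmnc A + ε / 2 with hρdef
  have hρpos : 0 < ρ := lt_of_le_of_lt (hmnc_nonneg A) (by rw [hρdef]; linarith)
  obtain ⟨S, hS⟩ := exists_cover_of_lt hA (by rw [hρdef]; linarith : hmnc A < ρ)
  -- A ⊆ convexHull S + ball 0 ρ
  have hsub : A ⊆ convexHull ℝ (S : Set E) + ball (0:E) ρ := by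
    intro x hx
    obtain ⟨p, hpS, hp⟩ := by simpa using hS hx
    refine ⟨p, subset_convexHull ℝ _ hpS, x - p, by
      simpa [mem_ball, dist_eq_norm, norm_sub_rev] using hp, by simp⟩
  have hconv : Convex ℝ (convexHull ℝ (S : Set E) + ball (0:E) ρ) :=
    (convex_convexHull ℝ _).add (convex_ball 0 ρ)
  have hsub2 : convexHull ℝ A ⊆ convexHull ℝ (S : Set E) + ball (0:E) ρ :=
    convexHull_min hsub hconv
  -- compact convex hull of finite set: totally bounded
  have hK : IsCompact (convexHull ℝ (S : Set E)) :=
    S.finite_toSet.isCompact_convexHull ℝ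
  obtain ⟨T, hTfin, hT⟩ := (totallyBounded_iff.1 hK.totallyBounded) (ε/2) (by linarith)
  refine ⟨hTfin.toFinset, ?_⟩
  intro z hz
  obtain ⟨u, hu, v, hv, rfl⟩ := hsub2 hz
  obtain ⟨y, hyT, hy⟩ := by simpa using hT hu
  simp only [mem_iUnion, exists_prop, Set.Finite.mem_toFinset]
  refine ⟨y, hyT, ?_⟩
  rw [mem_ball] at *
  calc dist (u + v) y ≤ dist u y + ‖v‖ := by
        simpa [dist_eq_norm, add_sub_right_comm] using norm_add_le (u - y) v
    _ < ε/2 + ρ := add_lt_add hy (by simpa [mem_ball, dist_eq_norm] using hv)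
    _ = hmnc A + ε := by rw [hρdef]; ring
end MNC

/-- `u` is a solution on `[0, tb]` of `u' = -u + G(u, l)`, `u 0 = x`, staying in `U`,
in the integral (variation of constants) form. -/
def IsSolG {E : Type*} [NormedAddCommGroup E] [NormedSpace ℝ E]
    (G : E → ℝ → E) (U : Set E) (tb : ℝ) (x : E) (l : ℝ) (u : ℝ → E) : Prop :=
  ContinuousOn u (Set.Icc 0 tb) ∧ (∀ t ∈ Set.Icc 0 tb, u t ∈ U) ∧
  ∀ t ∈ Set.Icc 0 tb,
    u t = Real.exp (-t) • x + ∫ τ in (0:ℝ)..t, Real.exp (-t + τ) • G (u τ) l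

section Analysis2
open Metric Pointwise
variable {E : Type*} [NormedAddCommGroup E] [NormedSpace ℝ E]

variable {G : E → ℝ → E} {U : Set E} {tb : ℝ} {x : E} {l : ℝ} {u : ℝ → E}

lemma integrand_cont (hGc : Continuous fun p : E × ℝ => G p.1 p.2)
    (hu : ContinuousOn u (Set.Icc 0 tb)) (l T : ℝ) :
    ContinuousOn (fun τ => Real.exp (-T + τ) • G (u τ) l) (Set.Icc 0 tb) := by
  have h1 : ContinuousOn (fun τ => G (u τ) l) (Set.Icc 0 tb) :=
    by have := hGc.comp_continuousOn (hu.prodMk (continuousOn_const (c := l))); exact this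
  exact (Real.continuous_exp.comp (continuous_const.add continuous_id)).continuousOn.smul h1

lemma integrand_intable (hGc : Continuous fun p : E × ℝ => G p.1 p.2)
    (hu : ContinuousOn u (Set.Icc 0 tb)) (l T : ℝ) {a b : ℝ}
    (ha : a ∈ Set.Icc 0 tb) (hb : b ∈ Set.Icc 0 tb) :
    IntervalIntegrable (fun τ => Real.exp (-T + τ) • G (u τ) l) MeasureTheory.volume a b := by
  exact ((integrand_cont hGc hu l T).mono (Set.uIcc_subset_Icc ha hb)).intervalIntegrable

lemma sol_decomp (hGc : Continuous fun p : E × ℝ => G p.1 p.2)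
    (hu : IsSolG G U tb x l u) {s T : ℝ} (h0s : 0 ≤ s) (hsT : s ≤ T) (hT : T ≤ tb) :
    u T = Real.exp (-(T - s)) • u s + ∫ τ in s..T, Real.exp (-T + τ) • G (u τ) l := by
  obtain ⟨huc, -, hid⟩ := hu
  have hs' : s ∈ Set.Icc (0:ℝ) tb := ⟨h0s, hsT.trans hT⟩
  have hT' : T ∈ Set.Icc (0:ℝ) tb := ⟨h0s.trans hsT, hT⟩
  have h0' : (0:ℝ) ∈ Set.Icc (0:ℝ) tb := ⟨le_rfl, (h0s.trans (hsT.trans hT))⟩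
  set g : ℝ → E := fun τ => Real.exp τ • G (u τ) l with hg
  have hgc : ContinuousOn g (Set.Icc 0 tb) := by
    simpa using integrand_cont hGc huc l 0
  have hgI : ∀ a ∈ Set.Icc (0:ℝ) tb, ∀ b ∈ Set.Icc (0:ℝ) tb,
      IntervalIntegrable g MeasureTheory.volume a b := by
    intro a ha b hb
    exact (hgc.mono (Set.uIcc_subset_Icc ha hb)).intervalIntegrable
  have key : ∀ r ∈ Set.Icc (0:ℝ) tb, ∀ a b : ℝ,
      (∫ τ in a..b, Real.exp (-r + τ) • G (u τ) l) = Real.exp (-r) • ∫ τ in a..b, g τ := by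
    intro r _ a b
    rw [← intervalIntegral.integral_smul]
    congr 1 with τ
    rw [hg, smul_smul, ← Real.exp_add]
  have hidT := hid T hT'
  have hids := hid s hs'
  rw [key T hT' 0 T] at hidT
  rw [key s hs' 0 s] at hids
  have hsplit : (∫ τ in (0:ℝ)..s, g τ) + (∫ τ in s..T, g τ) = ∫ τ in (0:ℝ)..T, g τ :=
    intervalIntegral.integral_add_adjacent_intervals (hgI 0 h0' s hs') (hgI s hs' T hT')
  have e1 : Real.exp (-(T-s)) * Real.exp (-s) = Real.exp (-T) := by
    rw [← Real.exp_add]; ring_nf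
  rw [key T hT' s T, hidT, hids, smul_add, smul_smul, smul_smul, e1,
    ← hsplit, smul_add, add_assoc]

lemma sol_dist (hGc : Continuous fun p : E → ℝ → E => p) : True := trivial

lemma sol_time_lip (hGc : Continuous fun p : E × ℝ => G p.1 p.2)
    (hu : IsSolG G U tb x l u) {R M : ℝ} (hR0 : 0 ≤ R) (hM0 : 0 ≤ M)
    (hR : ∀ y ∈ U, ‖y‖ ≤ R) (hM : ∀ y ∈ U, ∀ l' ∈ Set.Icc (0:ℝ) 1, ‖G y l'‖ ≤ M)
    (hl : l ∈ Set.Icc (0:ℝ) 1)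
    {s T : ℝ} (h0s : 0 ≤ s) (hsT : s ≤ T) (hT : T ≤ tb) :
    ‖u T - u s‖ ≤ (R + M) * (T - s) := by
  have hdec := sol_decomp hGc hu h0s hsT hT
  have hus : u s ∈ U := hu.2.1 s ⟨h0s, hsT.trans hT⟩
  have h1 : ‖Real.exp (-(T - s)) • u s - u s‖ ≤ R * (T - s) := by
    have : Real.exp (-(T-s)) • u s - u s = (Real.exp (-(T-s)) - 1) • u s := by
      rw [sub_smul, one_smul]
    rw [this, norm_smul]
    have he1 : Real.exp (-(T-s)) ≤ 1 := Real.exp_le_one_iff.2 (by linarith)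
    have he2 : 1 - (T - s) ≤ Real.exp (-(T-s)) := by
      have := Real.add_one_le_exp (-(T-s)); linarith
    have : ‖Real.exp (-(T-s)) - 1‖ ≤ T - s := by
      rw [Real.norm_eq_abs, abs_le]; constructor <;> linarith
    calc ‖Real.exp (-(T-s)) - 1‖ * ‖u s‖ ≤ (T - s) * R :=
          mul_le_mul this (hR _ hus) (norm_nonneg _) (by linarith)
      _ = R * (T - s) := by ring
  have h2 : ‖∫ τ in s..T, Real.exp (-T + τ) • G (u τ) l‖ ≤ M * (T - s) := by
    have := intervalIntegral.norm_integral_le_of_norm_le_const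
      (f := fun τ => Real.exp (-T + τ) • G (u τ) l) (a := s) (b := T) (C := M) ?_
    · calc ‖_‖ ≤ M * |T - s| := this
        _ = M * (T - s) := by rw [abs_of_nonneg (by linarith)]
    · intro τ hτ
      rw [Set.uIoc_of_le hsT] at hτ
      have hτm : τ ∈ Set.Icc (0:ℝ) tb := ⟨h0s.trans hτ.1.le, hτ.2.trans hT⟩
      rw [norm_smul, Real.norm_eq_abs, abs_of_pos (Real.exp_pos _)]
      have he : Real.exp (-T + τ) ≤ 1 := Real.exp_le_one_iff.2 (by linarith [hτ.2])
      calc Real.exp (-T + τ) * ‖G (u τ) l‖ ≤ 1 * M :=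
            mul_le_mul he (hM _ (hu.2.1 τ hτm) l hl) (norm_nonneg _) one_pos.le
        _ = M := one_mul M
  calc ‖u T - u s‖ = ‖(Real.exp (-(T-s)) • u s - u s) + ∫ τ in s..T, Real.exp (-T + τ) • G (u τ) l‖ := by
        rw [hdec]; congr 1; abel
    _ ≤ ‖Real.exp (-(T-s)) • u s - u s‖ + ‖∫ τ in s..T, Real.exp (-T + τ) • G (u τ) l‖ :=
        norm_add_le _ _
    _ ≤ R * (T - s) + M * (T - s) := add_le_add h1 h2
    _ = (R + M) * (T - s) := by ring

lemma integral_mem_smul [CompleteSpace E] {f : ℝ → E} {D : Set E} (hD : Convex ℝ D)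
    (hDc : IsClosed D) {s T : ℝ} (hsT : s < T)
    (hf : ∀ τ ∈ Set.Ioc s T, f τ ∈ D)
    (hfi : IntervalIntegrable f MeasureTheory.volume s T) :
    (∫ τ in s..T, f τ) ∈ (T - s) • D := by
  have hμ0 : MeasureTheory.volume (Set.Ioc s T) ≠ 0 := by
    rw [Real.volume_Ioc]
    simp only [ne_eq, ENNReal.ofReal_eq_zero, not_le]
    linarith
  have hμt : MeasureTheory.volume (Set.Ioc s T) ≠ ⊤ := by
    rw [Real.volume_Ioc]; exact ENNReal.ofReal_ne_top
  have havg : (⨍ τ in Set.Ioc s T, f τ) ∈ D := by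
    refine hD.set_average_mem hDc hμ0 hμt ?_ hfi.1
    exact (MeasureTheory.ae_restrict_iff' measurableSet_Ioc).2
      (Filter.Eventually.of_forall hf)
  have heq : (∫ τ in s..T, f τ) = (T - s) • ⨍ τ in Set.Ioc s T, f τ := by
    rw [intervalIntegral.integral_of_le hsT.le, MeasureTheory.setAverage_eq, smul_smul]
    rw [Real.volume_real_Ioc_of_le hsT.le]
    rw [mul_inv_cancel₀ (by linarith), one_smul]
  rw [heq]
  exact Set.smul_mem_smul_set havg

end Analysis2

open Metric Pointwise in
theorem stmt9 {E : Type*} [NormedAddCommGroup E] [NormedSpace ℝ E] [CompleteSpace E]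
    [TopologicalSpace.SeparableSpace E]
    (U V : Set E) (hU : IsOpen U) (hUb : IsBounded U) (hV : IsOpen V)
    (ρ : ℝ) (hρ : 0 < ρ)
    (hVU : ∀ x ∈ closure V, ∀ y : E, ‖y‖ < ρ → x + y ∈ U)
    (G : E → ℝ → E)
    (hGc : Continuous fun p : E × ℝ => G p.1 p.2)
    (hGl : ∀ x ∈ U, ∃ δ > (0:ℝ), ∃ L > (0:ℝ), ∀ x₁ ∈ Metric.ball x δ ∩ U,
      ∀ x₂ ∈ Metric.ball x δ ∩ U, ∀ l ∈ Set.Icc (0:ℝ) 1,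
        ‖G x₁ l - G x₂ l‖ ≤ L * ‖x₁ - x₂‖)
    (hGb : IsBounded {y : E | ∃ x ∈ U, ∃ l ∈ Set.Icc (0:ℝ) 1, y = G x l})
    (k : ℝ) (hk0 : 0 ≤ k) (hk1 : k < 1)
    (hGk : ∀ Ω ⊆ U, IsBounded Ω →
      hmnc {y : E | ∃ x ∈ Ω, ∃ l ∈ Set.Icc (0:ℝ) 1, y = G x l} ≤ k * hmnc Ω)
    (tb : ℝ) (htb : 0 < tb) (sol : E → ℝ → ℝ → E)
    (hsol : ∀ x ∈ closure V, ∀ l ∈ Set.Icc (0:ℝ) 1, IsSolG G U tb x l (sol x l)) :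
    ∀ t ∈ Set.Ioc (0:ℝ) tb, ∀ Ω ⊆ closure V,
      hmnc {y : E | ∃ x ∈ Ω, ∃ l ∈ Set.Icc (0:ℝ) 1, y = sol x l t} ≤
        Real.exp ((k - 1) * t) * hmnc Ω := by
  classical
  -- bounds
  obtain ⟨R₀, hR₀⟩ := isBounded_iff_forall_norm_le.1 hUb
  obtain ⟨M₀, hM₀⟩ := isBounded_iff_forall_norm_le.1 hGb
  set R : ℝ := max R₀ 0 with hRdef
  set M : ℝ := max M₀ 0 with hMdef
  have hR0 : 0 ≤ R := le_max_right _ _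
  have hM0 : 0 ≤ M := le_max_right _ _
  have hR : ∀ y ∈ U, ‖y‖ ≤ R := fun y hy => (hR₀ y hy).trans (le_max_left _ _)
  have hM : ∀ y ∈ U, ∀ l' ∈ Set.Icc (0:ℝ) 1, ‖G y l'‖ ≤ M := fun y hy l' hl' =>
    (hM₀ _ ⟨y, hy, l', hl', rfl⟩).trans (le_max_left _ _)
  set C : ℝ := R + M with hCdef
  have hC0 : 0 ≤ C := add_nonneg hR0 hM0
  have hclU : closure V ⊆ U := fun x hx => by
    simpa using hVU x hx 0 (by simpa using hρ)
  intro t ht Ω hΩ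
  have hΩU : Ω ⊆ U := hΩ.trans hclU
  have hΩb : IsBounded Ω := hUb.subset hΩU
  set Φ : ℝ → Set E := fun s => {y : E | ∃ x ∈ Ω, ∃ l ∈ Set.Icc (0:ℝ) 1, y = sol x l s}
    with hΦdef
  show hmnc (Φ t) ≤ Real.exp ((k - 1) * t) * hmnc Ω
  have hΦU : ∀ s ∈ Set.Icc (0:ℝ) tb, Φ s ⊆ U := by
    rintro s hs y ⟨x, hx, l, hl, rfl⟩
    exact (hsol x (hΩ hx) l hl).2.1 s hs
  have hΦb : ∀ s ∈ Set.Icc (0:ℝ) tb, IsBounded (Φ s) := fun s hs => hUb.subset (hΦU s hs)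
  have hsol0 : ∀ x ∈ closure V, ∀ l ∈ Set.Icc (0:ℝ) 1, sol x l 0 = x := by
    intro x hx l hl
    have := (hsol x hx l hl).2.2 0 ⟨le_rfl, htb.le⟩
    simpa using this
  have hΦ0 : Φ 0 = Ω := by
    ext y
    constructor
    · rintro ⟨x, hx, l, hl, rfl⟩
      rw [hsol0 x (hΩ hx) l hl]; exact hx
    · intro hy
      exact ⟨y, hy, 0, ⟨le_rfl, zero_le_one⟩, (hsol0 y (hΩ hy) 0 ⟨le_rfl, zero_le_one⟩).symm⟩
  -- one-step estimate
  have step : ∀ s T : ℝ, 0 ≤ s → s < T → T ≤ tb →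
      hmnc (Φ T) ≤ (Real.exp (-(T - s)) + k * (T - s)) * hmnc (Φ s)
        + k * C * (T - s) ^ 2 := by
    intro s T h0s hsT hTtb
    have hsle : s ≤ tb := (hsT.trans_le hTtb).le
    have hsI : s ∈ Set.Icc (0:ℝ) tb := ⟨h0s, hsle⟩
    have hTI : T ∈ Set.Icc (0:ℝ) tb := ⟨h0s.trans hsT.le, hTtb⟩
    set A : Set E := {y : E | ∃ x ∈ Ω, ∃ l ∈ Set.Icc (0:ℝ) 1, ∃ τ ∈ Set.Icc s T,
      y = sol x l τ} with hAdef
    have hAU : A ⊆ U := by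
      rintro y ⟨x, hx, l, hl, τ, hτ, rfl⟩
      exact (hsol x (hΩ hx) l hl).2.1 τ ⟨h0s.trans hτ.1, hτ.2.trans hTtb⟩
    have hAb : IsBounded A := hUb.subset hAU
    set GA : Set E := {y : E | ∃ a ∈ A, ∃ l ∈ Set.Icc (0:ℝ) 1, y = G a l} with hGAdef
    have hGAb : IsBounded GA := hGb.subset (by
      rintro y ⟨a, ha, l, hl, rfl⟩; exact ⟨a, hAU ha, l, hl, rfl⟩)
    set D : Set E := closure (convexHull ℝ (insert (0:E) GA)) with hDdef
    have hDconv : Convex ℝ D := (convex_convexHull ℝ _).closure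
    have hDc : IsClosed D := isClosed_closure
    have hDb : IsBounded D := (isBounded_convexHull.2 (hGAb.insert 0)).closure
    have hincl : Φ T ⊆ Real.exp (-(T - s)) • Φ s + (T - s) • D := by
      rintro y ⟨x, hx, l, hl, rfl⟩
      have hu := hsol x (hΩ hx) l hl
      have hdec := sol_decomp hGc hu h0s hsT.le hTtb
      refine ⟨Real.exp (-(T - s)) • sol x l s,
        Set.smul_mem_smul_set ⟨x, hx, l, hl, rfl⟩,
        ∫ τ in s..T, Real.exp (-T + τ) • G (sol x l τ) l, ?_, hdec.symm⟩
      refine integral_mem_smul hDconv hDc hsT ?_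
        (integrand_intable hGc hu.1 l T hsI hTI)
      intro τ hτ
      have hgGA : G (sol x l τ) l ∈ GA :=
        ⟨sol x l τ, ⟨x, hx, l, hl, τ, ⟨hτ.1.le, hτ.2⟩, rfl⟩, l, hl, rfl⟩
      have ha1 : Real.exp (-T + τ) ≤ 1 := Real.exp_le_one_iff.2 (by linarith [hτ.2])
      have ha0 : (0:ℝ) < Real.exp (-T + τ) := Real.exp_pos _
      refine subset_closure ?_
      have h0m : (0:E) ∈ convexHull ℝ (insert (0:E) GA) :=
        subset_convexHull _ _ (Set.mem_insert _ _)
      have hgm : G (sol x l τ) l ∈ convexHull ℝ (insert (0:E) GA) :=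
        subset_convexHull _ _ (Set.mem_insert_of_mem _ hgGA)
      have hmem := (convex_convexHull ℝ (insert (0:E) GA)) hgm h0m ha0.le
        (by linarith : (0:ℝ) ≤ 1 - Real.exp (-T + τ)) (by ring)
      simpa using hmem
    have hDle : hmnc D ≤ k * (hmnc (Φ s) + C * (T - s)) := by
      have h1 : hmnc D ≤ hmnc GA := by
        calc hmnc D ≤ hmnc (convexHull ℝ (insert (0:E) GA)) :=
              hmnc_closure_le (isBounded_convexHull.2 (hGAb.insert 0))
          _ ≤ hmnc (insert (0:E) GA) := hmnc_convexHull_le (hGAb.insert 0)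
          _ ≤ hmnc GA := hmnc_insert_zero_le hGAb
      have h2 : hmnc GA ≤ k * hmnc A := hGk A hAU hAb
      have h3 : hmnc A ≤ hmnc (Φ s) + C * (T - s) := by
        have hsub : A ⊆ Φ s + Metric.closedBall (0:E) (C * (T - s)) := by
          rintro y ⟨x, hx, l, hl, τ, hτ, rfl⟩
          refine ⟨sol x l s, ⟨x, hx, l, hl, rfl⟩, sol x l τ - sol x l s, ?_, by simp⟩
          rw [Metric.mem_closedBall, dist_zero_right]
          have hlip := sol_time_lip hGc (hsol x (hΩ hx) l hl) hR0 hM0 hR hM hl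
            h0s hτ.1 (hτ.2.trans hTtb)
          calc ‖sol x l τ - sol x l s‖ ≤ (R + M) * (τ - s) := hlip
            _ ≤ C * (T - s) := by
                rw [hCdef]
                exact mul_le_mul_of_nonneg_left (by linarith [hτ.2]) hC0
        calc hmnc A ≤ hmnc (Φ s + Metric.closedBall (0:E) (C * (T - s))) :=
              hmnc_mono hsub (isBounded_add (hΦb s hsI) Metric.isBounded_closedBall)
          _ ≤ hmnc (Φ s) + hmnc (Metric.closedBall (0:E) (C * (T - s))) :=
              hmnc_add_le (hΦb s hsI) Metric.isBounded_closedBall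
          _ ≤ hmnc (Φ s) + C * (T - s) := by
              have := hmnc_closedBall_le (E := E) (C * (T - s))
                (mul_nonneg hC0 (by linarith))
              linarith
      calc hmnc D ≤ k * hmnc A := h1.trans h2
        _ ≤ k * (hmnc (Φ s) + C * (T - s)) := mul_le_mul_of_nonneg_left h3 hk0
    have hb1 : IsBounded (Real.exp (-(T - s)) • Φ s) := (hΦb s hsI).smul₀ _
    have hb2 : IsBounded ((T - s) • D) := hDb.smul₀ _
    calc hmnc (Φ T) ≤ hmnc (Real.exp (-(T - s)) • Φ s + (T - s) • D) :=
          hmnc_mono hincl (isBounded_add hb1 hb2)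
      _ ≤ hmnc (Real.exp (-(T - s)) • Φ s) + hmnc ((T - s) • D) := hmnc_add_le hb1 hb2
      _ ≤ Real.exp (-(T - s)) * hmnc (Φ s) + (T - s) * hmnc D :=
          add_le_add (hmnc_smul_le (hΦb s hsI) (Real.exp_pos _))
            (hmnc_smul_le hDb (by linarith))
      _ ≤ Real.exp (-(T - s)) * hmnc (Φ s)
            + (T - s) * (k * (hmnc (Φ s) + C * (T - s))) := by
          have := mul_le_mul_of_nonneg_left hDle (by linarith : (0:ℝ) ≤ T - s)
          linarith
      _ = (Real.exp (-(T - s)) + k * (T - s)) * hmnc (Φ s) + k * C * (T - s) ^ 2 := by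
          ring
  -- discrete iteration
  have hb0 : 0 ≤ hmnc Ω := hmnc_nonneg Ω
  have key : ∀ n : ℕ, 1 ≤ n → hmnc (Φ t) ≤
      Real.exp ((k - 1) * t + t ^ 2 / n) * hmnc Ω
        + k * C * t ^ 2 * Real.exp (k * t) / n := by
    intro n hn
    have hnR : (0:ℝ) < n := by exact_mod_cast hn
    set h : ℝ := t / n with hhdef
    have hh : 0 < h := div_pos ht.1 hnR
    have hnh : (n:ℝ) * h = t := by rw [hhdef]; field_simp
    set q : ℝ := Real.exp (-h) + k * h with hqdef
    have hq0 : 0 ≤ q := by positivity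
    have hqle : q ≤ Real.exp (k * h) := by
      have h1 : Real.exp (-h) ≤ 1 := Real.exp_le_one_iff.2 (by linarith)
      have h2 := Real.add_one_le_exp (k * h)
      rw [hqdef]; linarith
    have claim : ∀ i : ℕ, i ≤ n → hmnc (Φ (i * h)) ≤
        q ^ i * hmnc Ω + i * (k * C * h ^ 2) * Real.exp (k * (i * h)) := by
      intro i
      induction i with
      | zero => intro _; norm_num [hΦ0]
      | succ i ih =>
        intro hin
        have hprev := ih (Nat.le_of_succ_le hin)
        have hstep := step ((i:ℝ) * h) (((i:ℝ) + 1) * h)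
          (by positivity) (by nlinarith) (by
            have : ((i:ℝ) + 1) * h ≤ (n:ℝ) * h := by
              have : ((i:ℝ) + 1) ≤ (n:ℝ) := by exact_mod_cast hin
              nlinarith
            rw [hnh] at this; exact this.trans ht.2)
        have hTs : ((i:ℝ) + 1) * h - (i:ℝ) * h = h := by ring
        rw [hTs] at hstep
        push_cast
        set E1 : ℝ := Real.exp (k * ((i:ℝ) * h)) with hE1def
        set E2 : ℝ := Real.exp (k * (((i:ℝ) + 1) * h)) with hE2def
        have hE12 : Real.exp (k * h) * E1 = E2 := by
          rw [hE1def, hE2def, ← Real.exp_add]; ring_nf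
        have hE2one : 1 ≤ E2 := Real.one_le_exp (by positivity)
        have m1 : q * hmnc (Φ ((i:ℝ) * h)) ≤
            q * (q ^ i * hmnc Ω + i * (k * C * h ^ 2) * E1) :=
          mul_le_mul_of_nonneg_left hprev hq0
        have m2 : q * ((i:ℝ) * (k * C * h ^ 2) * E1) ≤
            Real.exp (k * h) * ((i:ℝ) * (k * C * h ^ 2) * E1) :=
          mul_le_mul_of_nonneg_right hqle (by positivity)
        have m3 : Real.exp (k * h) * ((i:ℝ) * (k * C * h ^ 2) * E1)
            = (i:ℝ) * (k * C * h ^ 2) * E2 := by rw [← hE12]; ring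
        have m4 : k * C * h ^ 2 ≤ k * C * h ^ 2 * E2 :=
          le_mul_of_one_le_right (by positivity) hE2one
        calc hmnc (Φ (((i:ℝ) + 1) * h))
            ≤ q * hmnc (Φ ((i:ℝ) * h)) + k * C * h ^ 2 := hstep
          _ ≤ q * (q ^ i * hmnc Ω + (i:ℝ) * (k * C * h ^ 2) * E1) + k * C * h ^ 2 := by
              linarith
          _ = q ^ (i + 1) * hmnc Ω + q * ((i:ℝ) * (k * C * h ^ 2) * E1)
              + k * C * h ^ 2 := by ring
          _ ≤ q ^ (i + 1) * hmnc Ω + (i:ℝ) * (k * C * h ^ 2) * E2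
              + k * C * h ^ 2 * E2 := by linarith [m2, m3, m4]
          _ = q ^ (i + 1) * hmnc Ω + ((i:ℝ) + 1) * (k * C * h ^ 2) * E2 := by ring
    have hfin := claim n le_rfl
    rw [hnh] at hfin
    have hexph : Real.exp (-h) ≤ 1 - h + h ^ 2 := by
      have h1 : h + 1 ≤ Real.exp h := Real.add_one_le_exp h
      have h2 : Real.exp (-h) * Real.exp h = 1 := by
        rw [← Real.exp_add]; simp
      nlinarith [Real.exp_pos (-h), Real.exp_pos h, hh.le]
    have hqle2 : q ≤ Real.exp ((k - 1) * h + h ^ 2) := by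
      have := Real.add_one_le_exp ((k - 1) * h + h ^ 2)
      rw [hqdef]; linarith
    have hqn : q ^ n ≤ Real.exp ((k - 1) * t + t ^ 2 / n) := by
      calc q ^ n ≤ (Real.exp ((k - 1) * h + h ^ 2)) ^ n := pow_le_pow_left₀ hq0 hqle2 n
        _ = Real.exp ((n:ℝ) * ((k - 1) * h + h ^ 2)) := by rw [Real.exp_nat_mul]
        _ = Real.exp ((k - 1) * t + t ^ 2 / n) := by
            congr 1
            have hrw : (n:ℝ) * ((k - 1) * h + h ^ 2) = (k - 1) * ((n:ℝ) * h) + ((n:ℝ) * h) * h := by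
              ring
            rw [hrw, hnh, hhdef]; ring
    have e2 : (n:ℝ) * (k * C * h ^ 2) * Real.exp (k * t)
        = k * C * t ^ 2 * Real.exp (k * t) / n := by
      have hrw : (n:ℝ) * (k * C * h ^ 2) * Real.exp (k * t)
          = k * C * (((n:ℝ) * h) * h) * Real.exp (k * t) := by ring
      rw [hrw, hnh, hhdef]; ring
    have e3 := mul_le_mul_of_nonneg_right hqn hb0
    rw [e2] at hfin
    linarith [hfin, e3]
  have hlim : Filter.Tendsto (fun n : ℕ =>
      Real.exp ((k - 1) * t + t ^ 2 / n) * hmnc Ω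
        + k * C * t ^ 2 * Real.exp (k * t) / n) Filter.atTop
      (nhds (Real.exp ((k - 1) * t) * hmnc Ω + 0)) := by
    apply Filter.Tendsto.add
    · apply Filter.Tendsto.mul_const
      have h0 : Filter.Tendsto (fun n : ℕ => t ^ 2 / n) Filter.atTop (nhds 0) :=
        tendsto_const_div_atTop_nhds_zero_nat _
      have h1 : Filter.Tendsto (fun n : ℕ => (k - 1) * t + t ^ 2 / n) Filter.atTop
          (nhds ((k - 1) * t)) := by
        simpa using (tendsto_const_nhds.add h0)
      exact (Real.continuous_exp.tendsto _).comp h1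
    · exact tendsto_const_div_atTop_nhds_zero_nat _
  have := ge_of_tendsto hlim (Filter.eventually_atTop.2 ⟨1, key⟩)
  linarith
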